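/- arXiv:1212.0816 — 4 statements merged into one kernel-verified Lean document; each statement's English description precedes it below -/
import Mathlib

section
/- (LaSalle's invariance principle.) Let Y be a Banach space, U ⊆ Y open, f : U → Y a continuous vector field, and let φ : [0,∞) × U → U be a continuous semiflow such that for every y ∈ U the curve t ↦ φ(t, y) is differentiable with derivative f(φ(t, y)) (i.e. φ solves ẏ = f(y)). Let H : U → ℝ be continuously Fréchet differentiable and suppose that the Lie derivative dH(y)[f(y)] ≤ 0 for all y ∈ U. Set N := {y ∈ U : dH(y)[f(y)] = 0} and let I be the largest invariant set contained in N (i.e. the union of all subsets S ⊆ N with φ(t, S) ⊆ S for all t ≥ 0). Then for every y₀ ∈ U whose forward orbit is precompact (closure compact and contained in U), the ω-limit set of y₀ is a nonempty subset of I. -/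
open Filter Topology Set

/-- **LaSalle's invariance principle.**  Let `Y` be a Banach space, `U ⊆ Y` open,
`f` a continuous vector field on `U`, and `φ` a continuous semiflow on `U` solving
`ẏ = f(y)`.  If `H` is `C¹` on `U` with Lie derivative `dH(y)[f(y)] ≤ 0` on `U`,
`N = {y ∈ U : dH(y)[f(y)] = 0}`, and `I` is the largest invariant subset of `N`,
then the ω-limit set of any point with precompact forward orbit is a nonempty
subset of `I`. -/
theorem lasalle_invariance_principle
    {Y : Type*} [NormedAddCommGroup Y] [NormedSpace ℝ Y] [CompleteSpace Y]
    (U : Set Y) (hU : IsOpen U)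
    (f : Y → Y) (hf : ContinuousOn f U)
    (φ : ℝ × Y → Y)
    (hφU : ∀ t : ℝ, 0 ≤ t → ∀ y ∈ U, φ (t, y) ∈ U)
    (hφcont : ContinuousOn φ (Ici (0:ℝ) ×ˢ U))
    (hφ0 : ∀ y ∈ U, φ (0, y) = y)
    (hφsemi : ∀ t s : ℝ, 0 ≤ t → 0 ≤ s → ∀ y ∈ U, φ (t + s, y) = φ (t, φ (s, y)))
    (hφode : ∀ y ∈ U, ∀ t : ℝ, 0 ≤ t →
      HasDerivWithinAt (fun s => φ (s, y)) (f (φ (t, y))) (Ici (0:ℝ)) t)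
    (H : Y → ℝ) (H' : Y → Y →L[ℝ] ℝ)
    (hH : ∀ y ∈ U, HasFDerivAt H (H' y) y)
    (hH' : ContinuousOn H' U)
    (hLie : ∀ y ∈ U, H' y (f y) ≤ 0)
    (N : Set Y) (hN : N = {y | y ∈ U ∧ H' y (f y) = 0})
    (I : Set Y)
    (hI : I = ⋃₀ {S : Set Y | S ⊆ N ∧ ∀ t : ℝ, 0 ≤ t → ∀ z ∈ S, φ (t, z) ∈ S})
    (y₀ : Y) (hy₀ : y₀ ∈ U)
    (horb : IsCompact (closure {x : Y | ∃ t : ℝ, 0 ≤ t ∧ φ (t, y₀) = x}))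
    (horbU : closure {x : Y | ∃ t : ℝ, 0 ≤ t ∧ φ (t, y₀) = x} ⊆ U) :
    ({η : Y | ∃ ts : ℕ → ℝ, (∀ n, 0 ≤ ts n) ∧ Tendsto ts atTop atTop ∧
        Tendsto (fun n => φ (ts n, y₀)) atTop (𝓝 η)}).Nonempty ∧
    {η : Y | ∃ ts : ℕ → ℝ, (∀ n, 0 ≤ ts n) ∧ Tendsto ts atTop atTop ∧
        Tendsto (fun n => φ (ts n, y₀)) atTop (𝓝 η)} ⊆ I := by
  -- Notation
  set Orb : Set Y := {x : Y | ∃ t : ℝ, 0 ≤ t ∧ φ (t, y₀) = x} with hOrb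
  set Ω : Set Y := {η : Y | ∃ ts : ℕ → ℝ, (∀ n, 0 ≤ ts n) ∧ Tendsto ts atTop atTop ∧
      Tendsto (fun n => φ (ts n, y₀)) atTop (𝓝 η)} with hΩ
  have horbmem : ∀ t : ℝ, 0 ≤ t → φ (t, y₀) ∈ Orb := fun t ht => ⟨t, ht, rfl⟩
  have hΩU : Ω ⊆ U := by
    rintro η ⟨ts, hts0, -, hlim⟩
    exact horbU (mem_closure_of_tendsto hlim
      (Eventually.of_forall fun n => horbmem _ (hts0 n)))
  -- The energy along the orbit of y₀
  have hUmem : ∀ t : ℝ, 0 ≤ t → φ (t, y₀) ∈ U := fun t ht => hφU t ht y₀ hy₀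
  have hg' : ∀ t : ℝ, 0 ≤ t →
      HasDerivWithinAt (fun s => H (φ (s, y₀)))
        (H' (φ (t, y₀)) (f (φ (t, y₀)))) (Ici (0:ℝ)) t := by
    intro t ht
    exact HasFDerivAt.comp_hasDerivWithinAt t (hH _ (hUmem t ht)) (hφode y₀ hy₀ t ht)
  have hganti : AntitoneOn (fun s => H (φ (s, y₀))) (Ici (0:ℝ)) := by
    have hderivAt : ∀ t : ℝ, t ∈ interior (Ici (0:ℝ)) →
        HasDerivAt (fun s => H (φ (s, y₀)))
          (H' (φ (t, y₀)) (f (φ (t, y₀)))) t := by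
      intro t ht
      rw [interior_Ici] at ht
      exact (hg' t (le_of_lt ht)).hasDerivAt (Ici_mem_nhds ht)
    refine antitoneOn_of_deriv_nonpos (convex_Ici 0)
      (fun t ht => (hg' t ht).continuousWithinAt)
      (fun t ht => (hderivAt t ht).differentiableAt.differentiableWithinAt) ?_
    intro t ht
    rw [(hderivAt t ht).deriv]
    rw [interior_Ici] at ht
    exact hLie _ (hUmem t (le_of_lt ht))
  -- H is constant on Ω
  have hHle : ∀ η ∈ Ω, ∀ η' ∈ Ω, H η ≤ H η' := by
    rintro η ⟨ts, hts0, htsT, hlim⟩ η' ⟨ss, hss0, hssT, hlim'⟩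
    have hHη : Tendsto (fun n => H (φ (ts n, y₀))) atTop (𝓝 (H η)) :=
      ((hH η (hΩU ⟨ts, hts0, htsT, hlim⟩)).continuousAt.tendsto).comp hlim
    have hHη' : Tendsto (fun n => H (φ (ss n, y₀))) atTop (𝓝 (H η')) :=
      ((hH η' (hΩU ⟨ss, hss0, hssT, hlim'⟩)).continuousAt.tendsto).comp hlim'
    by_contra hcon
    push_neg at hcon
    obtain ⟨m, hm⟩ : ∃ m, H (φ (ss m, y₀)) < H η :=
      (hHη'.eventually (eventually_lt_nhds hcon)).exists
    have : H η ≤ H (φ (ss m, y₀)) := by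
      refine le_of_tendsto hHη ?_
      filter_upwards [htsT.eventually_ge_atTop (ss m)] with n hn
      exact hganti (hss0 m) (hts0 n) hn
    exact absurd (lt_of_le_of_lt this hm) (lt_irrefl _)
  -- Ω is invariant
  have hinv : ∀ t : ℝ, 0 ≤ t → ∀ η ∈ Ω, φ (t, η) ∈ Ω := by
    rintro t ht η hη
    obtain ⟨ts, hts0, htsT, hlim⟩ := hη
    have hηU : η ∈ U := hΩU ⟨ts, hts0, htsT, hlim⟩
    refine ⟨fun n => t + ts n, fun n => add_nonneg ht (hts0 n),
      tendsto_atTop_add_const_left _ t htsT, ?_⟩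
    have hcw : ContinuousWithinAt φ (Ici (0:ℝ) ×ˢ U) (t, η) :=
      hφcont (t, η) ⟨ht, hηU⟩
    have hseq : Tendsto (fun n => ((t, φ (ts n, y₀)) : ℝ × Y)) atTop
        (𝓝[Ici (0:ℝ) ×ˢ U] (t, η)) := by
      rw [tendsto_nhdsWithin_iff]
      refine ⟨?_, Eventually.of_forall fun n => ⟨ht, hUmem _ (hts0 n)⟩⟩
      rw [nhds_prod_eq]
      exact tendsto_const_nhds.prodMk hlim
    have : Tendsto (fun n => φ (t, φ (ts n, y₀))) atTop (𝓝 (φ (t, η))) :=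
      hcw.tendsto.comp hseq
    refine this.congr fun n => ?_
    exact (hφsemi t (ts n) ht (hts0 n) y₀ hy₀).symm
  -- Ω ⊆ N
  have hΩN : Ω ⊆ N := by
    intro η hη
    have hηU : η ∈ U := hΩU hη
    have hconst : ∀ s ∈ Ici (0:ℝ), H (φ (s, η)) = H η := by
      intro s hs
      exact le_antisymm (hHle _ (hinv s hs η hη) _ hη) (hHle _ hη _ (hinv s hs η hη))
    have hd1 : HasDerivWithinAt (fun s => H (φ (s, η)))
        (H' (φ ((0:ℝ), η)) (f (φ ((0:ℝ), η)))) (Ici (0:ℝ)) 0 :=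
      HasFDerivAt.comp_hasDerivWithinAt 0 (hH _ (hφU 0 le_rfl η hηU)) (hφode η hηU 0 le_rfl)
    have hd2 : HasDerivWithinAt (fun s => H (φ (s, η))) 0 (Ici (0:ℝ)) 0 := by
      refine (hasDerivWithinAt_const (0:ℝ) (Ici (0:ℝ)) (H η)).congr ?_ ?_
      · exact hconst
      · exact hconst 0 Set.self_mem_Ici
    have huniq : H' (φ ((0:ℝ), η)) (f (φ ((0:ℝ), η))) = 0 := by
      rw [← hd1.derivWithin (uniqueDiffOn_Ici 0 0 Set.self_mem_Ici),
        hd2.derivWithin (uniqueDiffOn_Ici 0 0 Set.self_mem_Ici)]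
    rw [hφ0 η hηU] at huniq
    rw [hN]
    exact ⟨hηU, huniq⟩
  -- Conclusion
  constructor
  · -- Nonemptiness
    have hx : ∀ n : ℕ, φ ((n : ℝ), y₀) ∈ closure Orb := fun n =>
      subset_closure (horbmem _ (Nat.cast_nonneg n))
    obtain ⟨a, -, ψ, hψ, hlim⟩ := horb.tendsto_subseq hx
    refine ⟨a, fun n => ((ψ n : ℕ) : ℝ), fun n => Nat.cast_nonneg _, ?_, hlim⟩
    exact tendsto_natCast_atTop_atTop.comp hψ.tendsto_atTop
  · -- Ω ⊆ I
    rw [hI]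
    exact subset_sUnion_of_mem ⟨hΩN, fun t ht z hz => hinv t ht z hz⟩
end

section
/- Let B ⊆ ℝ³ be open and connected, and let ζ₀, ζ₁ : B → ℝ³ be continuously differentiable injective maps with everywhere invertible Jacobian. If their right Cauchy–Green tensors coincide, i.e. (Dζ₀(x))ᵀ Dζ₀(x) = (Dζ₁(x))ᵀ Dζ₁(x) for all x ∈ B, then ζ₀ and ζ₁ induce the same pairwise Euclidean distances: ‖ζ₁(x) − ζ₁(y)‖ = ‖ζ₀(x) − ζ₀(y)‖ for all x, y ∈ B. -/
open Matrix

/-- The Jacobian matrix of `ζ` (within the set `B`) at `x`, with respect to the standard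
basis of `ℝ³`. -/
noncomputable def jacobianMat (B : Set (EuclideanSpace ℝ (Fin 3)))
    (ζ : EuclideanSpace ℝ (Fin 3) → EuclideanSpace ℝ (Fin 3))
    (x : EuclideanSpace ℝ (Fin 3)) : Matrix (Fin 3) (Fin 3) ℝ :=
  Matrix.of fun i j => fderivWithin ℝ ζ B x (EuclideanSpace.single j 1) i

/-- The right Cauchy–Green tensor `C = (Dζ)ᵀ Dζ` of `ζ` at `x`. -/
noncomputable def cauchyGreen (B : Set (EuclideanSpace ℝ (Fin 3)))
    (ζ : EuclideanSpace ℝ (Fin 3) → EuclideanSpace ℝ (Fin 3))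
    (x : EuclideanSpace ℝ (Fin 3)) : Matrix (Fin 3) (Fin 3) ℝ :=
  (jacobianMat B ζ x)ᵀ * jacobianMat B ζ x

abbrev E3 := EuclideanSpace ℝ (Fin 3)

lemma E3.decomp (v : E3) : v = ∑ j, v j • EuclideanSpace.single j (1:ℝ) := by
  ext k
  rw [WithLp.ofLp_sum, Finset.sum_apply]
  simp [EuclideanSpace.single_apply]

lemma cg_inner (B : Set E3) (hB : IsOpen B) (ζ : E3 → E3) (x : E3) (hx : x ∈ B) (i j : Fin 3) :
    cauchyGreen B ζ x i j =
      inner ℝ (fderiv ℝ ζ x (EuclideanSpace.single i 1)) (fderiv ℝ ζ x (EuclideanSpace.single j 1)) := by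
  simp only [cauchyGreen, jacobianMat, Matrix.mul_apply, Matrix.transpose_apply, Matrix.of_apply,
    fderivWithin_of_isOpen hB hx, PiLp.inner_apply, RCLike.inner_apply, conj_trivial]
  exact Finset.sum_congr rfl fun _ _ => mul_comm _ _

lemma normsq_fderiv (B : Set E3) (hB : IsOpen B) (ζ : E3 → E3) (x : E3) (hx : x ∈ B) (v : E3) :
    ‖fderiv ℝ ζ x v‖^2 = ∑ i, ∑ j, v i * v j * cauchyGreen B ζ x i j := by
  set A := fderiv ℝ ζ x
  have h1 : A v = ∑ j, v j • A (EuclideanSpace.single j (1:ℝ)) := by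
    conv_lhs => rw [E3.decomp v]
    simp [map_sum]
  rw [← real_inner_self_eq_norm_sq, h1, sum_inner]
  refine Finset.sum_congr rfl fun i _ => ?_
  rw [inner_sum]
  refine Finset.sum_congr rfl fun j _ => ?_
  rw [real_inner_smul_left, real_inner_smul_right, cg_inner B hB ζ x hx i j]
  ring

/-- From nonvanishing Jacobian determinant, get a `ContinuousLinearEquiv` version of the
derivative. -/
lemma exists_cle (B : Set E3) (hB : IsOpen B) (ζ : E3 → E3) (x : E3) (hx : x ∈ B)
    (hdet : (jacobianMat B ζ x).det ≠ 0) :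
    ∃ A : E3 ≃L[ℝ] E3, (A : E3 →L[ℝ] E3) = fderiv ℝ ζ x := by
  set b := (EuclideanSpace.basisFun (Fin 3) ℝ).toBasis
  have hmat : LinearMap.toMatrix b b ((fderiv ℝ ζ x : E3 →L[ℝ] E3) : E3 →ₗ[ℝ] E3)
      = jacobianMat B ζ x := by
    ext i j
    simp [LinearMap.toMatrix_apply, jacobianMat, fderivWithin_of_isOpen hB hx, b]
  have hu : IsUnit ((LinearMap.toMatrix b b ((fderiv ℝ ζ x : E3 →L[ℝ] E3) : E3 →ₗ[ℝ] E3)).det) := by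
    rw [hmat]; exact isUnit_iff_ne_zero.2 hdet
  refine ⟨(LinearEquiv.ofIsUnitDet hu).toContinuousLinearEquiv, ?_⟩
  ext v
  have h := LinearEquiv.coe_ofIsUnitDet hu
  have : (LinearEquiv.ofIsUnitDet hu) v = fderiv ℝ ζ x v :=
    congrFun (congrArg (fun (f : E3 →ₗ[ℝ] E3) => (f : E3 → E3)) h) v
  simpa using congrFun (congrArg (fun (w : E3) => (w : Fin 3 → ℝ)) this) _

lemma key (B : Set E3) (hB : IsOpen B) (ζ ζ' : E3 → E3)
    (hζ : ContDiffOn ℝ 1 ζ B) (hζ' : ContDiffOn ℝ 1 ζ' B)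
    (hinj : Set.InjOn ζ B)
    (hdet : ∀ x ∈ B, (jacobianMat B ζ x).det ≠ 0)
    (hnorm : ∀ x ∈ B, ∀ v, ‖fderiv ℝ ζ' x v‖ = ‖fderiv ℝ ζ x v‖) :
    ∃ φ : E3 → E3, (∀ x ∈ B, φ (ζ x) = ζ' x) ∧ IsOpen (ζ '' B) ∧
      (∀ u ∈ ζ '' B, DifferentiableAt ℝ φ u) ∧
      (∀ u ∈ ζ '' B, ∀ w, ‖fderiv ℝ φ u w‖ = ‖w‖) := by
  classical
  set ψ : E3 → E3 := fun u => if h : u ∈ ζ '' B then h.choose else 0 with hψdef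
  have hψ : ∀ u ∈ ζ '' B, ψ u ∈ B ∧ ζ (ψ u) = u := by
    intro u hu
    simp only [hψdef, dif_pos hu]
    exact ⟨hu.choose_spec.1, hu.choose_spec.2⟩
  have hψζ : ∀ x ∈ B, ψ (ζ x) = x := by
    intro x hx
    have h := hψ (ζ x) ⟨x, hx, rfl⟩
    exact hinj h.1 hx h.2
  refine ⟨ζ' ∘ ψ, fun x hx => by simp [hψζ x hx], ?_⟩
  have main : ∀ x ∈ B, (ζ '' B ∈ nhds (ζ x)) ∧ DifferentiableAt ℝ (ζ' ∘ ψ) (ζ x) ∧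
      ∀ w, ‖fderiv ℝ (ζ' ∘ ψ) (ζ x) w‖ = ‖w‖ := by
    intro x hx
    obtain ⟨A, hA⟩ := exists_cle B hB ζ x hx (hdet x hx)
    have hsd : HasStrictFDerivAt ζ (A : E3 →L[ℝ] E3) x := by
      rw [hA]
      exact (hζ.contDiffAt (hB.mem_nhds hx)).hasStrictFDerivAt one_ne_zero
    set inv := hsd.localInverse ζ A x with hinvdef
    have hinv := hsd.to_localInverse
    have hinvx : inv (ζ x) = x := hsd.localInverse_apply_image
    have h1 : ∀ᶠ y in nhds (ζ x), inv y ∈ B := by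
      have hc : ContinuousAt inv (ζ x) := hinv.continuousAt
      exact hc.preimage_mem_nhds (hB.mem_nhds (by rw [hinvx]; exact hx))
    have h2 : ∀ᶠ y in nhds (ζ x), ζ (inv y) = y := hsd.eventually_right_inverse
    have hmem : ∀ᶠ y in nhds (ζ x), y ∈ ζ '' B := by
      filter_upwards [h1, h2] with y hy1 hy2
      exact ⟨inv y, hy1, hy2⟩
    have heq : (ζ' ∘ ψ) =ᶠ[nhds (ζ x)] (ζ' ∘ inv) := by
      filter_upwards [h1, h2, hmem] with y hy1 hy2 hy3
      have h4 := hψ y hy3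
      have : ψ y = inv y := hinj h4.1 hy1 (by rw [h4.2, hy2])
      simp [Function.comp, this]
    have hζ'd : HasFDerivAt ζ' (fderiv ℝ ζ' x) x :=
      ((hζ'.contDiffAt (hB.mem_nhds hx)).differentiableAt one_ne_zero).hasFDerivAt
    have hcomp : HasFDerivAt (ζ' ∘ inv) ((fderiv ℝ ζ' x).comp (A.symm : E3 →L[ℝ] E3)) (ζ x) := by
      have h5 : HasFDerivAt inv (A.symm : E3 →L[ℝ] E3) (ζ x) := hinv.hasFDerivAt
      have h6 : HasFDerivAt ζ' (fderiv ℝ ζ' x) (inv (ζ x)) := by rw [hinvx]; exact hζ'd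
      exact h6.comp (ζ x) h5
    have hφd : HasFDerivAt (ζ' ∘ ψ) ((fderiv ℝ ζ' x).comp (A.symm : E3 →L[ℝ] E3)) (ζ x) :=
      hcomp.congr_of_eventuallyEq heq
    refine ⟨hmem, hφd.differentiableAt, ?_⟩
    intro w
    rw [hφd.fderiv]
    calc ‖((fderiv ℝ ζ' x).comp (A.symm : E3 →L[ℝ] E3)) w‖
        = ‖fderiv ℝ ζ' x (A.symm w)‖ := rfl
      _ = ‖fderiv ℝ ζ x (A.symm w)‖ := hnorm x hx _
      _ = ‖(A : E3 →L[ℝ] E3) (A.symm w)‖ := by rw [hA]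
      _ = ‖w‖ := by rw [ContinuousLinearEquiv.coe_coe, A.apply_symm_apply]
  refine ⟨?_, ?_, ?_⟩
  · rw [isOpen_iff_mem_nhds]
    rintro u ⟨x, hx, rfl⟩
    exact (main x hx).1
  · rintro u ⟨x, hx, rfl⟩
    exact (main x hx).2.1
  · rintro u ⟨x, hx, rfl⟩
    exact (main x hx).2.2

lemma lipOn (φ : E3 → E3) (U : Set E3)
    (hdiff : ∀ u ∈ U, DifferentiableAt ℝ φ u)
    (hn : ∀ u ∈ U, ∀ w, ‖fderiv ℝ φ u w‖ = ‖w‖)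
    {c : E3} {r : ℝ} (hball : Metric.ball c r ⊆ U) :
    ∀ a ∈ Metric.ball c r, ∀ b ∈ Metric.ball c r, ‖φ a - φ b‖ ≤ ‖a - b‖ := by
  intro a ha b hb
  have h := Convex.norm_image_sub_le_of_norm_fderiv_le
    (fun z hz => hdiff z (hball hz))
    (fun z hz => ContinuousLinearMap.opNorm_le_bound _ zero_le_one
      (fun w => by rw [hn z (hball hz) w, one_mul]))
    (convex_ball c r) hb ha
  simpa using h

lemma inner_preserved (Q : E3 →L[ℝ] E3) (hQ : ∀ w, ‖Q w‖ = ‖w‖) (w w' : E3) :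
    (inner ℝ (Q w) (Q w') : ℝ) = inner ℝ w w' := by
  rw [real_inner_eq_norm_add_mul_self_sub_norm_mul_self_sub_norm_mul_self_div_two,
    real_inner_eq_norm_add_mul_self_sub_norm_mul_self_sub_norm_mul_self_div_two (x := w)]
  rw [← map_add, hQ, hQ, hQ]

lemma surj_of_norm (Q : E3 →L[ℝ] E3) (hQ : ∀ w, ‖Q w‖ = ‖w‖) : Function.Surjective Q := by
  have hinj : Function.Injective (Q : E3 →ₗ[ℝ] E3) := by
    intro a b hab
    have : ‖Q (a - b)‖ = 0 := by rw [map_sub]; simp [show Q a = Q b from hab]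
    rw [hQ] at this
    simpa [sub_eq_zero] using norm_eq_zero.mp this
  exact LinearMap.injective_iff_surjective.mp hinj

lemma local_affine (φ : E3 → E3) (u : E3) (ε : ℝ) (hε : 0 < ε)
    (hiso : ∀ a ∈ Metric.ball u ε, ∀ b ∈ Metric.ball u ε, ‖φ a - φ b‖ = ‖a - b‖)
    (hdiff : DifferentiableAt ℝ φ u)
    (hQn : ∀ w, ‖fderiv ℝ φ u w‖ = ‖w‖) :
    ∀ b ∈ Metric.ball u ε, φ b = φ u + fderiv ℝ φ u (b - u) := by
  intro b hb
  set Q := fderiv ℝ φ u with hQdef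
  have hFz : (fun a => (inner ℝ (φ a - φ b) (φ a - φ b) : ℝ) - inner ℝ (a - b) (a - b))
      =ᶠ[nhds u] (fun _ => (0:ℝ)) := by
    filter_upwards [Metric.isOpen_ball.mem_nhds (Metric.mem_ball_self hε)] with a ha
    rw [real_inner_self_eq_norm_sq, real_inner_self_eq_norm_sq, hiso a ha b hb]
    ring
  have h1 : HasFDerivAt (fun a => φ a - φ b) Q u := hdiff.hasFDerivAt.sub_const _
  have h2 : HasFDerivAt (fun a : E3 => a - b) (ContinuousLinearMap.id ℝ E3) u :=
    (hasFDerivAt_id u).sub_const _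
  have h3 := (HasFDerivAt.inner ℝ h1 h1).sub (HasFDerivAt.inner ℝ h2 h2)
  have h0 : HasFDerivAt (fun a => (inner ℝ (φ a - φ b) (φ a - φ b) : ℝ) - inner ℝ (a - b) (a - b))
      (0 : E3 →L[ℝ] ℝ) u := ((hasFDerivAt_const (0:ℝ) u).congr_of_eventuallyEq hFz)
  have hDeq := h3.unique h0
  have hkey : ∀ w, (inner ℝ (Q w) (φ u - φ b) : ℝ) = inner ℝ w (u - b) := by
    intro w
    have := congrFun (congrArg (fun (f : E3 →L[ℝ] ℝ) => (f : E3 → ℝ)) hDeq) w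
    simp only [ContinuousLinearMap.coe_comp', Function.comp_apply, ContinuousLinearMap.prod_apply,
      fderivInnerCLM_apply, ContinuousLinearMap.coe_sub', Pi.sub_apply,
      ContinuousLinearMap.coe_id', id_eq, ContinuousLinearMap.zero_apply] at this
    have c1 : (inner ℝ (φ u - φ b) (Q w) : ℝ) = inner ℝ (Q w) (φ u - φ b) := real_inner_comm _ _
    have c2 : (inner ℝ (u - b) w : ℝ) = inner ℝ w (u - b) := real_inner_comm _ _
    linarith
  have hz : φ u - φ b - Q (u - b) = 0 := by
    obtain ⟨w, hw⟩ := surj_of_norm Q (fun w => by rw [hQdef]; exact hQn w) (φ u - φ b - Q (u - b))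
    have h5 : (inner ℝ (Q w) (φ u - φ b - Q (u - b)) : ℝ) = 0 := by
      rw [inner_sub_right, hkey w, inner_preserved Q (fun w => by rw [hQdef]; exact hQn w) w (u - b)]
      ring
    rw [hw] at h5
    exact inner_self_eq_zero.mp h5
  have h9 : φ u - φ b = Q (u - b) := by
    have := hz
    rw [sub_eq_zero] at this
    exact this
  have : Q (b - u) = -(Q (u - b)) := by rw [← map_neg]; congr 1; abel
  rw [this, ← h9]
  abel

/-- Two injective `C¹` configurations of an open connected body `B ⊆ ℝ³` with everywhere
invertible Jacobians and the same right Cauchy–Green tensor induce the same pairwise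
Euclidean distances. -/
theorem same_cauchyGreen_same_distances
    (B : Set (EuclideanSpace ℝ (Fin 3))) (hB : IsOpen B) (hBconn : IsConnected B)
    (ζ₀ ζ₁ : EuclideanSpace ℝ (Fin 3) → EuclideanSpace ℝ (Fin 3))
    (h₀ : ContDiffOn ℝ 1 ζ₀ B) (h₁ : ContDiffOn ℝ 1 ζ₁ B)
    (hinj₀ : Set.InjOn ζ₀ B) (hinj₁ : Set.InjOn ζ₁ B)
    (hdet₀ : ∀ x ∈ B, (jacobianMat B ζ₀ x).det ≠ 0)
    (hdet₁ : ∀ x ∈ B, (jacobianMat B ζ₁ x).det ≠ 0)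
    (hCG : ∀ x ∈ B, cauchyGreen B ζ₀ x = cauchyGreen B ζ₁ x) :
    ∀ x ∈ B, ∀ y ∈ B, ‖ζ₁ x - ζ₁ y‖ = ‖ζ₀ x - ζ₀ y‖ := by
  intro x hx y hy
  have hnorm01 : ∀ z ∈ B, ∀ v, ‖fderiv ℝ ζ₁ z v‖ = ‖fderiv ℝ ζ₀ z v‖ := by
    intro z hz v
    have ha := normsq_fderiv B hB ζ₀ z hz v
    have hb := normsq_fderiv B hB ζ₁ z hz v
    rw [hCG z hz] at ha
    nlinarith [norm_nonneg (fderiv ℝ ζ₁ z v), norm_nonneg (fderiv ℝ ζ₀ z v)]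
  have hnorm10 : ∀ z ∈ B, ∀ v, ‖fderiv ℝ ζ₀ z v‖ = ‖fderiv ℝ ζ₁ z v‖ :=
    fun z hz v => (hnorm01 z hz v).symm
  obtain ⟨φ, hφeq, hUopen, hφdiff, hφnorm⟩ := key B hB ζ₀ ζ₁ h₀ h₁ hinj₀ hdet₀ hnorm01
  obtain ⟨φ', hφ'eq, hU'open, hφ'diff, hφ'norm⟩ := key B hB ζ₁ ζ₀ h₁ h₀ hinj₁ hdet₁ hnorm10
  -- local isometry of φ on ζ₀ '' B
  have hiso : ∀ u ∈ ζ₀ '' B, ∃ ε > 0, Metric.ball u ε ⊆ ζ₀ '' B ∧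
      ∀ a ∈ Metric.ball u ε, ∀ b ∈ Metric.ball u ε, ‖φ a - φ b‖ = ‖a - b‖ := by
    rintro u ⟨z, hz, rfl⟩
    have hφu : φ (ζ₀ z) = ζ₁ z := hφeq z hz
    have hu1 : φ (ζ₀ z) ∈ ζ₁ '' B := by rw [hφu]; exact ⟨z, hz, rfl⟩
    obtain ⟨ε₁, hε₁, hball1⟩ := Metric.isOpen_iff.mp hU'open _ hu1
    obtain ⟨ε₀, hε₀, hball0⟩ := Metric.isOpen_iff.mp hUopen (ζ₀ z) ⟨z, hz, rfl⟩
    have hεpos : 0 < min ε₀ ε₁ := lt_min hε₀ hε₁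
    have hsub : Metric.ball (ζ₀ z) (min ε₀ ε₁) ⊆ ζ₀ '' B :=
      fun a ha => hball0 (Metric.ball_subset_ball (min_le_left _ _) ha)
    refine ⟨min ε₀ ε₁, hεpos, hsub, ?_⟩
    intro a ha b hb
    have hle := lipOn φ _ hφdiff hφnorm hsub a ha b hb
    have hmem : ∀ c ∈ Metric.ball (ζ₀ z) (min ε₀ ε₁), φ c ∈ Metric.ball (φ (ζ₀ z)) ε₁ := by
      intro c hc
      have hl := lipOn φ _ hφdiff hφnorm hsub c hc (ζ₀ z) (Metric.mem_ball_self hεpos)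
      rw [Metric.mem_ball, dist_eq_norm]
      calc ‖φ c - φ (ζ₀ z)‖ ≤ ‖c - ζ₀ z‖ := hl
        _ < min ε₀ ε₁ := by rw [← dist_eq_norm]; exact hc
        _ ≤ ε₁ := min_le_right _ _
    have hid : ∀ c ∈ ζ₀ '' B, φ' (φ c) = c := by
      rintro c ⟨z', hz', rfl⟩
      rw [hφeq z' hz', hφ'eq z' hz']
    have h2 := lipOn φ' _ hφ'diff hφ'norm hball1 (φ a) (hmem a ha) (φ b) (hmem b hb)
    rw [hid a (hsub ha), hid b (hsub hb)] at h2
    exact le_antisymm hle h2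
  -- local constancy of derivative and offset
  have hconst : ∀ u ∈ ζ₀ '' B, ∃ ε > 0, Metric.ball u ε ⊆ ζ₀ '' B ∧
      ∀ b ∈ Metric.ball u ε, fderiv ℝ φ b = fderiv ℝ φ u ∧
        φ b - fderiv ℝ φ u b = φ u - fderiv ℝ φ u u := by
    intro u hu
    obtain ⟨ε, hε, hsub, hiso'⟩ := hiso u hu
    have haff := local_affine φ u ε hε hiso' (hφdiff u hu) (hφnorm u hu)
    refine ⟨ε, hε, hsub, ?_⟩
    intro b hb
    set Q := fderiv ℝ φ u with hQdef
    have h2 : φ b - Q b = φ u - Q u := by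
      rw [haff b hb, map_sub]; abel
    have heq : φ =ᶠ[nhds b] (fun a => φ u + Q (a - u)) := by
      filter_upwards [Metric.isOpen_ball.mem_nhds hb] with a ha
      exact haff a ha
    have haffd : HasFDerivAt (fun a : E3 => φ u + Q (a - u)) Q b := by
      have h4 := (Q.hasFDerivAt (x := b)).sub_const (Q u)
      have h5 := h4.const_add (φ u)
      have h6 : (fun a : E3 => φ u + Q (a - u)) = (fun a : E3 => φ u + (Q a - Q u)) := by
        funext a; rw [map_sub]
      rw [h6]
      exact h5
    exact ⟨(haffd.congr_of_eventuallyEq heq).fderiv, h2⟩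
  -- global constancy by connectedness
  have hu₀ : ζ₀ x ∈ ζ₀ '' B := ⟨x, hx, rfl⟩
  set Q₀ := fderiv ℝ φ (ζ₀ x) with hQ₀def
  set c₀ := φ (ζ₀ x) - Q₀ (ζ₀ x) with hc₀def
  have hglob : ∀ u ∈ ζ₀ '' B, fderiv ℝ φ u = Q₀ ∧ φ u - Q₀ u = c₀ := by
    set V₁ := {u : E3 | u ∈ ζ₀ '' B ∧ fderiv ℝ φ u = Q₀ ∧ φ u - Q₀ u = c₀} with hV₁def
    set V₂ := {u : E3 | u ∈ ζ₀ '' B ∧ ¬(fderiv ℝ φ u = Q₀ ∧ φ u - Q₀ u = c₀)} with hV₂def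
    have hV₁o : IsOpen V₁ := by
      rw [Metric.isOpen_iff]
      rintro u ⟨hu, hQ, hc⟩
      obtain ⟨ε, hε, hsub, hc'⟩ := hconst u hu
      refine ⟨ε, hε, fun b hb => ?_⟩
      obtain ⟨hd1, hd2⟩ := hc' b hb
      refine ⟨hsub hb, by rw [hd1, hQ], ?_⟩
      rw [hQ] at hd2
      rw [hd2, hc]
    have hV₂o : IsOpen V₂ := by
      rw [Metric.isOpen_iff]
      rintro u ⟨hu, hP⟩
      obtain ⟨ε, hε, hsub, hc'⟩ := hconst u hu
      refine ⟨ε, hε, fun b hb => ?_⟩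
      obtain ⟨hd1, hd2⟩ := hc' b hb
      refine ⟨hsub hb, fun hPb => hP ?_⟩
      obtain ⟨he1, he2⟩ := hPb
      have hfu : fderiv ℝ φ u = Q₀ := by rw [← hd1, he1]
      refine ⟨hfu, ?_⟩
      rw [hfu] at hd2
      rw [← hd2, he2]
    by_contra hcon
    push_neg at hcon
    obtain ⟨u, hu, hnP⟩ := hcon
    have hnP' : ¬(fderiv ℝ φ u = Q₀ ∧ φ u - Q₀ u = c₀) := fun h => hnP h.1 h.2
    have hUconn : IsConnected (ζ₀ '' B) := hBconn.image ζ₀ h₀.continuousOn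
    have hpre := hUconn.isPreconnected
    have hcover : ζ₀ '' B ⊆ V₁ ∪ V₂ := by
      intro v hv
      by_cases hP : fderiv ℝ φ v = Q₀ ∧ φ v - Q₀ v = c₀
      · exact Or.inl ⟨hv, hP⟩
      · exact Or.inr ⟨hv, hP⟩
    have hne1 : (ζ₀ '' B ∩ V₁).Nonempty := ⟨ζ₀ x, hu₀, hu₀, rfl, rfl⟩
    have hne2 : (ζ₀ '' B ∩ V₂).Nonempty := ⟨u, hu, hu, hnP'⟩
    obtain ⟨v, _, hv1, hv2⟩ := hpre V₁ V₂ hV₁o hV₂o hcover hne1 hne2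
    exact hv2.2 hv1.2
  have e1 : ζ₁ x = Q₀ (ζ₀ x) + c₀ := by
    rw [← hφeq x hx]
    have := (hglob _ ⟨x, hx, rfl⟩).2
    rw [← this]; abel
  have e2 : ζ₁ y = Q₀ (ζ₀ y) + c₀ := by
    rw [← hφeq y hy]
    have := (hglob _ ⟨y, hy, rfl⟩).2
    rw [← this]; abel
  have e3 : ζ₁ x - ζ₁ y = Q₀ (ζ₀ x - ζ₀ y) := by
    rw [e1, e2, map_sub]; abel
  rw [e3]
  exact hφnorm _ hu₀ _
end

section
/- (Liouville-type rigidity.) Let n ≥ 1, let U ⊆ ℝⁿ be open and connected, and let φ : U → ℝⁿ be continuously differentiable with (Dφ(x))ᵀ Dφ(x) = Id for every x ∈ U (i.e. Dφ(x) is an orthogonal matrix at every point). Then φ is the restriction of an affine isometry: there exist an orthogonal matrix R ∈ O(n) and a vector b ∈ ℝⁿ such that φ(x) = Rx + b for all x ∈ U. -/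
open Matrix Metric
open scoped RealInnerProductSpace

set_option linter.unusedSectionVars false
set_option linter.unusedVariables false


lemma mulVec_of_apply_single {n : ℕ} (f : (Fin n → ℝ) →L[ℝ] (Fin n → ℝ)) (w : Fin n → ℝ) :
    (Matrix.of fun i j => f (Pi.single j 1) i).mulVec w = f w := by
  have hw : w = ∑ j, w j • (Pi.single j 1 : Fin n → ℝ) := by
    funext k
    simp [Finset.sum_apply, Pi.single_apply]
  funext i
  rw [Matrix.mulVec]
  conv_rhs => rw [hw]
  simp [dotProduct, map_sum, Finset.sum_apply, mul_comm]

lemma sum_sq_eq_of_orth {n : ℕ} (f : (Fin n → ℝ) →L[ℝ] (Fin n → ℝ))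
    (h : (Matrix.of fun i j => f (Pi.single j 1) i)ᵀ *
        (Matrix.of fun i j => f (Pi.single j 1) i) = 1) (w : Fin n → ℝ) :
    ∑ i, (f w i)^2 = ∑ i, (w i)^2 := by
  set A := Matrix.of fun i j => f (Pi.single j 1) i with hA
  have h1 : f w = A.mulVec w := (mulVec_of_apply_single f w).symm
  have h2 : (A.mulVec w) ⬝ᵥ (A.mulVec w) = w ⬝ᵥ w := by
    rw [Matrix.dotProduct_mulVec, ← Matrix.mulVec_transpose,
      Matrix.mulVec_mulVec, h, Matrix.one_mulVec]
  simpa [h1, dotProduct, pow_two] using h2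

section Euclid

variable {E : Type*} [NormedAddCommGroup E] [InnerProductSpace ℝ E] [FiniteDimensional ℝ E]

lemma exists_cle' (f : E →L[ℝ] E) (hf : ∀ v, ‖f v‖ = ‖v‖) :
    ∃ F : E ≃L[ℝ] E, (F : E →L[ℝ] E) = f := by
  have hinj : Function.Injective f := by
    intro a b hab
    have := hf (a - b)
    rw [map_sub, hab, sub_self, norm_zero] at this
    exact sub_eq_zero.mp (norm_eq_zero.mp this.symm)
  have hsurj : Function.Surjective f :=
    (LinearMap.injective_iff_surjective (f := (f : E →ₗ[ℝ] E))).mp hinj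
  exact ⟨(LinearEquiv.ofBijective (f : E →ₗ[ℝ] E) ⟨hinj, hsurj⟩).toContinuousLinearEquiv,
    by ext v; rfl⟩

lemma local_isometry (V : Set E) (hV : IsOpen V) (ψ : E → E) (hψ : ContDiffOn ℝ 1 ψ V)
    (hiso : ∀ x ∈ V, ∀ v, ‖fderiv ℝ ψ x v‖ = ‖v‖) (x₀ : E) (hx₀ : x₀ ∈ V) :
    ∃ ε > 0, ball x₀ ε ⊆ V ∧ ∀ a ∈ ball x₀ ε, ∀ b ∈ ball x₀ ε, ‖ψ a - ψ b‖ = ‖a - b‖ := by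
  have hd : ∀ x ∈ V, HasFDerivAt ψ (fderiv ℝ ψ x) x := fun x hx =>
    ((hψ.contDiffAt (hV.mem_nhds hx)).differentiableAt one_ne_zero).hasFDerivAt
  -- an equiv version of the derivative at x₀
  obtain ⟨F, hF⟩ := exists_cle' (fderiv ℝ ψ x₀) (hiso x₀ hx₀)
  have hstrict : HasStrictFDerivAt ψ (F : E →L[ℝ] E) x₀ := by
    rw [hF]
    exact (hψ.contDiffAt (hV.mem_nhds hx₀)).hasStrictFDerivAt one_ne_zero
  set p := hstrict.toOpenPartialHomeomorph ψ with hp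
  have hpcoe : (p : E → E) = ψ := hstrict.toOpenPartialHomeomorph_coe
  have hx₀p : x₀ ∈ p.source := hstrict.mem_toOpenPartialHomeomorph_source
  -- the inverse is 1-Lipschitz on a small ball around ψ x₀
  have hOpen : IsOpen (p.target ∩ p.symm ⁻¹' V) := p.isOpen_inter_preimage_symm hV
  have hψx₀mem : ψ x₀ ∈ p.target ∩ p.symm ⁻¹' V := by
    constructor
    · exact hstrict.image_mem_toOpenPartialHomeomorph_target
    · show p.symm (ψ x₀) ∈ V
      have : p.symm (ψ x₀) = x₀ := by
        rw [← hpcoe]; exact p.left_inv hx₀p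
      rwa [this]
  obtain ⟨s, hs, hsub⟩ := isOpen_iff.mp hOpen _ hψx₀mem
  have hg : ∀ y ∈ ball (ψ x₀) s, ∃ f' : E →L[ℝ] E, HasFDerivWithinAt p.symm f' (ball (ψ x₀) s) y
      ∧ ‖f'‖ ≤ 1 := by
    intro y hy
    obtain ⟨hyt, hyV⟩ := hsub hy
    obtain ⟨G, hG⟩ := exists_cle' (fderiv ℝ ψ (p.symm y)) (hiso _ hyV)
    have hder : HasFDerivAt p (G : E →L[ℝ] E) (p.symm y) := by
      rw [hpcoe, hG]; exact hd _ hyV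
    refine ⟨(G.symm : E →L[ℝ] E), (p.hasFDerivAt_symm hyt hder).hasFDerivWithinAt, ?_⟩
    refine ContinuousLinearMap.opNorm_le_bound _ zero_le_one (fun w => ?_)
    have h2 := hiso _ hyV (G.symm w)
    rw [← hG] at h2
    simp only [ContinuousLinearEquiv.coe_coe] at h2 ⊢
    rw [G.apply_symm_apply] at h2
    rw [one_mul, ← h2]
  choose! f' hf' hf'norm using hg
  have hglip : ∀ a ∈ ball (ψ x₀) s, ∀ b ∈ ball (ψ x₀) s, ‖p.symm a - p.symm b‖ ≤ ‖a - b‖ := by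
    intro a ha b hb
    have := (convex_ball (ψ x₀) s).norm_image_sub_le_of_norm_hasFDerivWithin_le
      hf' hf'norm hb ha
    simpa using this
  -- now choose ε
  have hcont : ContinuousAt ψ x₀ := (hψ.contDiffAt (hV.mem_nhds hx₀)).continuousAt
  obtain ⟨δ, hδ, hδsub⟩ := isOpen_iff.mp (hV.inter p.open_source) x₀ ⟨hx₀, hx₀p⟩
  obtain ⟨δ', hδ', hδ'sub⟩ := Metric.continuousAt_iff.mp hcont s hs
  refine ⟨min δ δ', lt_min hδ hδ', fun z hz => (hδsub (ball_subset_ball (min_le_left _ _) hz)).1,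
    fun a ha b hb => ?_⟩
  have hmemV : ∀ z ∈ ball x₀ (min δ δ'), z ∈ V ∩ p.source :=
    fun z hz => hδsub (ball_subset_ball (min_le_left _ _) hz)
  have himg : ∀ z ∈ ball x₀ (min δ δ'), ψ z ∈ ball (ψ x₀) s := by
    intro z hz
    exact hδ'sub (ball_subset_ball (min_le_right _ _) hz)
  -- upper bound
  have hupper : ‖ψ a - ψ b‖ ≤ ‖a - b‖ := by
    have := (convex_ball x₀ (min δ δ')).norm_image_sub_le_of_norm_hasFDerivWithin_le
      (f' := fun x => fderiv ℝ ψ x)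
      (fun x hx => (hd x (hmemV x hx).1).hasFDerivWithinAt)
      (fun x hx => ContinuousLinearMap.opNorm_le_bound _ zero_le_one
        (fun w => by rw [hiso x (hmemV x hx).1, one_mul]))
      hb ha
    simpa using this
  -- lower bound
  have hlower : ‖a - b‖ ≤ ‖ψ a - ψ b‖ := by
    have hinva : p.symm (ψ a) = a := by rw [← hpcoe]; exact p.left_inv (hmemV a ha).2
    have hinvb : p.symm (ψ b) = b := by rw [← hpcoe]; exact p.left_inv (hmemV b hb).2
    calc ‖a - b‖ = ‖p.symm (ψ a) - p.symm (ψ b)‖ := by rw [hinva, hinvb]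
    _ ≤ ‖ψ a - ψ b‖ := hglip _ (himg a ha) _ (himg b hb)
  linarith


lemma curve_affine (ψ : E → E) (x₀ : E) (ε : ℝ) (hε : 0 < ε)
    (hdist : ∀ a ∈ ball x₀ ε, ∀ b ∈ ball x₀ ε, ‖ψ a - ψ b‖ = ‖a - b‖)
    (hder : HasFDerivAt ψ (fderiv ℝ ψ x₀) x₀)
    (y : E) (hy : y ∈ ball x₀ ε) :
    ψ y = ψ x₀ + fderiv ℝ ψ x₀ (y - x₀) := by
  set v := y - x₀ with hv
  have hvnorm : ‖v‖ < ε := by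
    rw [mem_ball, dist_eq_norm] at hy; exact hy
  have hmem : ∀ t : ℝ, |t| ≤ 1 → x₀ + t • v ∈ ball x₀ ε := by
    intro t ht
    rw [mem_ball, dist_eq_norm, add_sub_cancel_left, norm_smul, Real.norm_eq_abs]
    calc |t| * ‖v‖ ≤ 1 * ‖v‖ := mul_le_mul_of_nonneg_right ht (norm_nonneg v)
    _ < ε := by rwa [one_mul]
  have hx₀mem : x₀ ∈ ball x₀ ε := mem_ball_self hε
  have hu : ∀ t s : ℝ, |t| ≤ 1 → |s| ≤ 1 →
      ‖ψ (x₀ + t • v) - ψ (x₀ + s • v)‖ = |t - s| * ‖v‖ := by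
    intro t s ht hs
    rw [hdist _ (hmem t ht) _ (hmem s hs)]
    have : x₀ + t • v - (x₀ + s • v) = (t - s) • v := by
      rw [sub_smul]; abel
    rw [this, norm_smul, Real.norm_eq_abs]
  set w := ψ y - ψ x₀ with hw
  have hy1 : x₀ + (1:ℝ) • v = y := by rw [one_smul, hv]; abel
  have key : ∀ t : ℝ, |t| ≤ 1 → ψ (x₀ + t • v) = ψ x₀ + t • w := by
    intro t ht
    set a := ψ (x₀ + t • v) - ψ x₀ with ha
    have h1 : ‖a‖ = |t| * ‖v‖ := by
      have := hu t 0 ht (by norm_num)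
      simpa using this
    have h2 : ‖w‖ = ‖v‖ := by
      have := hu 1 0 (by norm_num) (by norm_num)
      rw [hy1] at this
      simpa using this
    have h3 : ‖a - w‖ = |t - 1| * ‖v‖ := by
      have := hu t 1 ht (by norm_num)
      rw [hy1] at this
      have heq : a - w = ψ (x₀ + t • v) - ψ y := by rw [ha, hw]; abel
      rw [heq]; exact this
    have hinner : (inner ℝ a w : ℝ) = t * ‖v‖^2 := by
      have e2 : ‖a - w‖^2 = ‖a‖^2 - 2 * (inner ℝ a w : ℝ) + ‖w‖^2 := norm_sub_sq_real a w
      rw [h1, h2, h3] at e2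
      have ht2 : (|t| * ‖v‖)^2 = t^2 * ‖v‖^2 := by rw [mul_pow, sq_abs]
      have ht3 : (|t-1| * ‖v‖)^2 = (t-1)^2 * ‖v‖^2 := by rw [mul_pow, sq_abs]
      rw [ht2, ht3] at e2
      nlinarith [e2]
    have hzero : ‖a - t • w‖^2 = 0 := by
      have e1 : ‖a - t • w‖^2 = ‖a‖^2 - 2 * (inner ℝ a (t • w) : ℝ) + ‖t • w‖^2 := norm_sub_sq_real _ _
      rw [real_inner_smul_right, hinner, norm_smul, Real.norm_eq_abs, h1, h2] at e1
      rw [e1]; simp only [mul_pow, sq_abs]; ring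
    have : a - t • w = 0 := by
      rwa [pow_eq_zero_iff (two_ne_zero), norm_eq_zero] at hzero
    have : a = t • w := sub_eq_zero.mp this
    rw [ha] at this
    rw [← this]; abel
  -- derivative of t ↦ ψ (x₀ + t • v) at 0 two ways
  have hder1 : HasDerivAt (fun t : ℝ => ψ (x₀ + t • v)) (fderiv ℝ ψ x₀ v) 0 := by
    have hc : HasDerivAt (fun t : ℝ => x₀ + t • v) v 0 := by
      have := ((hasDerivAt_id (0:ℝ)).smul_const v).const_add x₀
      simpa using this
    have hψ0 : HasFDerivAt ψ (fderiv ℝ ψ x₀) (x₀ + (0:ℝ) • v) := by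
      simpa using hder
    exact hψ0.comp_hasDerivAt 0 hc
  have hder2 : HasDerivAt (fun t : ℝ => ψ (x₀ + t • v)) w 0 := by
    have haff : HasDerivAt (fun t : ℝ => ψ x₀ + t • w) w 0 := by
      have := ((hasDerivAt_id (0:ℝ)).smul_const w).const_add (ψ x₀)
      simpa using this
    refine haff.congr_of_eventuallyEq ?_
    have hball : Metric.ball (0:ℝ) 1 ∈ nhds (0:ℝ) := ball_mem_nhds 0 one_pos
    filter_upwards [hball] with t ht
    rw [key t (le_of_lt (by simpa [Real.dist_eq] using ht))]
  have := hder1.unique hder2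
  rw [hw] at this
  rw [this]; abel
lemma euclid_rigidity (V : Set E) (hV : IsOpen V) (hVconn : IsPreconnected V)
    (ψ : E → E) (hψ : ContDiffOn ℝ 1 ψ V)
    (hiso : ∀ x ∈ V, ∀ v, ‖fderiv ℝ ψ x v‖ = ‖v‖) (x₀ : E) (hx₀ : x₀ ∈ V) :
    ∀ x ∈ V, ψ x = ψ x₀ + fderiv ℝ ψ x₀ x - fderiv ℝ ψ x₀ x₀ := by
  have hd : ∀ x ∈ V, HasFDerivAt ψ (fderiv ℝ ψ x) x := fun x hx =>
    ((hψ.contDiffAt (hV.mem_nhds hx)).differentiableAt one_ne_zero).hasFDerivAt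
  have hloc : ∀ x ∈ V, ∃ ε > 0, ball x ε ⊆ V ∧ ∀ y ∈ ball x ε,
      fderiv ℝ ψ y = fderiv ℝ ψ x ∧
      ψ y - fderiv ℝ ψ x y = ψ x - fderiv ℝ ψ x x := by
    intro x hx
    obtain ⟨ε, hε, hsub, hdist⟩ := local_isometry V hV ψ hψ hiso x hx
    have haff : ∀ y ∈ ball x ε, ψ y = ψ x + fderiv ℝ ψ x (y - x) :=
      curve_affine ψ x ε hε hdist (hd x hx)
    refine ⟨ε, hε, hsub, fun y hy => ?_⟩
    constructor
    · have hev : ψ =ᶠ[nhds y] (fun z => ψ x + fderiv ℝ ψ x (z - x)) := by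
        filter_upwards [isOpen_ball.mem_nhds hy] with z hz
        exact haff z hz
      rw [hev.fderiv_eq]
      have : HasFDerivAt (fun z => ψ x + fderiv ℝ ψ x (z - x)) (fderiv ℝ ψ x) y := by
        have h1 : HasFDerivAt (fun z : E => fderiv ℝ ψ x z) (fderiv ℝ ψ x) y :=
          (fderiv ℝ ψ x).hasFDerivAt
        have h2 := (h1.sub_const (fderiv ℝ ψ x x)).const_add (ψ x)
        convert h2 using 2 with z
        rw [map_sub]
      exact this.fderiv
    · rw [haff y hy, map_sub]; abel
  set A := fderiv ℝ ψ x₀ with hA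
  set S : Set E := {x | x ∈ V ∧ fderiv ℝ ψ x = A ∧ ψ x - A x = ψ x₀ - A x₀} with hS
  set T : Set E := {x | x ∈ V ∧ x ∉ S} with hT
  have hSopen : IsOpen S := by
    rw [Metric.isOpen_iff]
    rintro x ⟨hxV, hxD, hxc⟩
    obtain ⟨ε, hε, hsub, hball⟩ := hloc x hxV
    refine ⟨ε, hε, fun y hy => ?_⟩
    obtain ⟨hyD, hyc⟩ := hball y hy
    refine ⟨hsub hy, by rw [hyD, hxD], ?_⟩
    rw [hxD] at hyc
    rw [hyc, hxc]
  have hTopen : IsOpen T := by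
    rw [Metric.isOpen_iff]
    rintro x ⟨hxV, hxS⟩
    obtain ⟨ε, hε, hsub, hball⟩ := hloc x hxV
    refine ⟨ε, hε, fun y hy => ⟨hsub hy, fun hyS => hxS ?_⟩⟩
    obtain ⟨hyD, hyc⟩ := hball y hy
    obtain ⟨hyV, hyD', hyc'⟩ := hyS
    have hxD : fderiv ℝ ψ x = A := by rw [← hyD, hyD']
    refine ⟨hxV, hxD, ?_⟩
    rw [hxD] at hyc
    rw [← hyc, hyc']
  have hx₀S : x₀ ∈ S := ⟨hx₀, rfl, rfl⟩
  have hall : ∀ x ∈ V, x ∈ S := by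
    by_contra h
    push_neg at h
    obtain ⟨z, hzV, hzS⟩ := h
    obtain ⟨u, huV, huS, huT⟩ := hVconn S T hSopen hTopen
      (fun x hx => by
        by_cases hxS : x ∈ S
        · exact Or.inl hxS
        · exact Or.inr ⟨hx, hxS⟩)
      ⟨x₀, hx₀, hx₀S⟩ ⟨z, hzV, hzV, hzS⟩
    exact huT.2 huS
  intro x hx
  obtain ⟨-, -, hc⟩ := hall x hx
  have : ψ x = A x + (ψ x₀ - A x₀) := by rw [← hc]; abel
  rw [this]; abel

end Euclid

/-- **Liouville-type rigidity.** If `φ` is `C¹` on an open connected set `U ⊆ ℝⁿ` and its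
Jacobian matrix satisfies `(Dφ(x))ᵀ Dφ(x) = Id` at every point of `U`, then `φ` is the
restriction of an affine isometry: `φ(x) = R x + b` with `R ∈ O(n)`. -/
theorem liouville_rigidity {n : ℕ} (hn : 1 ≤ n)
    (U : Set (Fin n → ℝ)) (hU : IsOpen U) (hUconn : IsConnected U)
    (φ : (Fin n → ℝ) → (Fin n → ℝ)) (hφ : ContDiffOn ℝ 1 φ U)
    (horth : ∀ x ∈ U,
      (Matrix.of fun i j => fderivWithin ℝ φ U x (Pi.single j 1) i)ᵀ *
        (Matrix.of fun i j => fderivWithin ℝ φ U x (Pi.single j 1) i) = 1) :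
    ∃ (R : Matrix (Fin n) (Fin n) ℝ) (b : Fin n → ℝ),
      Rᵀ * R = 1 ∧ ∀ x ∈ U, φ x = R.mulVec x + b := by
  -- replace fderivWithin by fderiv
  have horth' : ∀ x ∈ U,
      (Matrix.of fun i j => fderiv ℝ φ x (Pi.single j 1) i)ᵀ *
        (Matrix.of fun i j => fderiv ℝ φ x (Pi.single j 1) i) = 1 := by
    intro x hx
    have := horth x hx
    rwa [fderivWithin_of_isOpen hU hx] at this
  set E := EuclideanSpace ℝ (Fin n)
  set e : E ≃L[ℝ] (Fin n → ℝ) := PiLp.continuousLinearEquiv 2 ℝ (fun _ : Fin n => ℝ) with he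
  set V : Set E := ⇑e ⁻¹' U with hV
  set ψ : E → E := fun x => e.symm (φ (e x)) with hψdef
  have hVopen : IsOpen V := hU.preimage e.continuous
  have hVconn : IsPreconnected V := by
    have himg : V = ⇑(e.symm) '' U := by
      rw [ContinuousLinearEquiv.image_symm_eq_preimage]
    rw [himg]
    exact hUconn.isPreconnected.image _ e.symm.continuous.continuousOn
  have hψ : ContDiffOn ℝ 1 ψ V :=
    e.symm.contDiff.comp_contDiffOn (hφ.comp e.contDiff.contDiffOn Set.Subset.rfl)
  have hdφ : ∀ x ∈ V, HasFDerivAt φ (fderiv ℝ φ (e x)) (e x) := fun x hx =>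
    ((hφ.contDiffAt (hU.mem_nhds hx)).differentiableAt one_ne_zero).hasFDerivAt
  have hderψ : ∀ x ∈ V, fderiv ℝ ψ x =
      ((e.symm : (Fin n → ℝ) →L[ℝ] E).comp
        ((fderiv ℝ φ (e x)).comp (e : E →L[ℝ] (Fin n → ℝ)))) := by
    intro x hx
    have step1 : HasFDerivAt (fun y : E => φ (e y))
        ((fderiv ℝ φ (e x)).comp (e : E →L[ℝ] (Fin n → ℝ))) x :=
      (hdφ x hx).comp x e.hasFDerivAt
    exact ((e.symm.hasFDerivAt).comp x step1).fderiv
  have hiso : ∀ x ∈ V, ∀ v, ‖fderiv ℝ ψ x v‖ = ‖v‖ := by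
    intro x hx v
    rw [hderψ x hx]
    have hsum := sum_sq_eq_of_orth (fderiv ℝ φ (e x)) (horth' (e x) hx) (e v)
    rw [EuclideanSpace.norm_eq, EuclideanSpace.norm_eq]
    congr 1
    simp only [ContinuousLinearMap.comp_apply, ContinuousLinearEquiv.coe_coe,
      Real.norm_eq_abs, sq_abs]
    convert hsum using 2
    all_goals rfl
  obtain ⟨x₀, hx₀U⟩ := hUconn.nonempty
  set xE : E := e.symm x₀ with hxE
  have hxEV : xE ∈ V := by
    show e (e.symm x₀) ∈ U
    rwa [e.apply_symm_apply]
  have hmain := euclid_rigidity V hVopen hVconn ψ hψ hiso xE hxEV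
  set A : (Fin n → ℝ) →L[ℝ] (Fin n → ℝ) := fderiv ℝ φ x₀ with hA
  have hAder : fderiv ℝ ψ xE =
      ((e.symm : (Fin n → ℝ) →L[ℝ] E).comp (A.comp (e : E →L[ℝ] (Fin n → ℝ)))) := by
    rw [hderψ xE hxEV, hA, e.apply_symm_apply]
  refine ⟨Matrix.of fun i j => A (Pi.single j 1) i, φ x₀ - A x₀, ?_, ?_⟩
  · have h0 := horth' x₀ hx₀U
    exact h0
  · intro x hxU
    set z : E := e.symm x with hz
    have hzV : z ∈ V := by
      show e (e.symm x) ∈ U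
      rwa [e.apply_symm_apply]
    have h3 := hmain z hzV
    rw [hAder] at h3
    have h4 := congrArg e h3
    simp only [hψdef, map_add, map_sub, e.apply_symm_apply,
      ContinuousLinearMap.comp_apply, ContinuousLinearEquiv.coe_coe] at h4
    simp only [hz, hxE, e.apply_symm_apply] at h4
    -- h4 : φ x = φ x₀ + A x - A x₀
    rw [mulVec_of_apply_single A x, h4]
    funext i
    simp [Pi.add_apply, Pi.sub_apply]
    ring
end

section
/- Let ω : ℝ → ℝ³ be twice continuously differentiable and suppose that for every fixed vector χ ∈ ℝ³ the map t ↦ ω̇(t) × χ + ω(t) × (ω(t) × χ) is constant in t (equivalently, its time derivative vanishes identically). Then ω is constant: ω̇(t) = 0 for all t ∈ ℝ. -/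
set_option maxHeartbeats 2000000 in
/-- Pure algebra: if `a ×ᵥ χ + u ×ᵥ (u ×ᵥ χ) = b ×ᵥ χ + v ×ᵥ (v ×ᵥ χ)` for all `χ`,
then `a = b` and `‖u‖² = ‖v‖²`. -/
lemma key_alg (a b u v : Fin 3 → ℝ)
    (h : ∀ χ : Fin 3 → ℝ,
      crossProduct a χ + crossProduct u (crossProduct u χ) =
      crossProduct b χ + crossProduct v (crossProduct v χ)) :
    a = b ∧ (u 0)^2+(u 1)^2+(u 2)^2 = (v 0)^2+(v 1)^2+(v 2)^2 := by
  have h0 := h ![1,0,0]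
  have h1 := h ![0,1,0]
  have h2 := h ![0,0,1]
  simp only [cross_apply] at h0 h1 h2
  have e00 := congrFun h0 0
  have e01 := congrFun h0 1
  have e02 := congrFun h0 2
  have e10 := congrFun h1 0
  have e11 := congrFun h1 1
  have e12 := congrFun h1 2
  have e20 := congrFun h2 0
  have e21 := congrFun h2 1
  have e22 := congrFun h2 2
  simp [Matrix.cons_val_zero, Matrix.cons_val_one] at e00 e01 e02 e10 e11 e12 e20 e21 e22
  refine ⟨funext fun i => ?_, by nlinarith [e00, e11, e22]⟩
  fin_cases i
  · simpa using (by nlinarith [e12, e21] : a 0 = b 0)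
  · simpa using (by nlinarith [e02, e20] : a 1 = b 1)
  · simpa using (by nlinarith [e01, e10] : a 2 = b 2)

/-- If `ω : ℝ → ℝ³` is `C²` and for every fixed vector `χ ∈ ℝ³` the quantity
`ω̇(t) × χ + ω(t) × (ω(t) × χ)` is constant in `t`, then `ω` is constant:
`ω̇ ≡ 0`. -/
theorem omega_const_of_L_const
    (ω : ℝ → (Fin 3 → ℝ)) (hω : ContDiff ℝ 2 ω)
    (hconst : ∀ χ : Fin 3 → ℝ, ∀ t s : ℝ,
      crossProduct (deriv ω t) χ + crossProduct (ω t) (crossProduct (ω t) χ) =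
      crossProduct (deriv ω s) χ + crossProduct (ω s) (crossProduct (ω s) χ)) :
    ∀ t : ℝ, deriv ω t = 0 := by
  have hdiff : Differentiable ℝ ω := hω.differentiable (by norm_num)
  set a : Fin 3 → ℝ := deriv ω 0 with ha
  -- Step 1: the derivative is constant, and the squared norm of ω is constant.
  have key : ∀ t s : ℝ, deriv ω t = deriv ω s ∧
      (ω t 0)^2+(ω t 1)^2+(ω t 2)^2 = (ω s 0)^2+(ω s 1)^2+(ω s 2)^2 := by
    intro t s
    exact key_alg _ _ _ _ (fun χ => hconst χ t s)
  have hda : ∀ t, deriv ω t = a := fun t => (key t 0).1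
  -- Step 2: ω is affine: ω t = ω 0 + t • a.
  have haff : ∀ t : ℝ, ω t = ω 0 + t • a := by
    have hg : ∀ t : ℝ, HasDerivAt (fun t : ℝ => ω t - t • a) 0 t := by
      intro t
      have h1 : HasDerivAt ω a t := by
        have := (hdiff t).hasDerivAt
        rwa [hda t] at this
      have h2 : HasDerivAt (fun t : ℝ => t • a) ((1:ℝ) • a) t :=
        (hasDerivAt_id t).smul_const a
      have h3 := h1.sub h2
      rw [one_smul, sub_self] at h3
      exact h3
    have hc := is_const_of_deriv_eq_zero (f := fun t : ℝ => ω t - t • a)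
      (fun t => (hg t).differentiableAt) (fun t => (hg t).deriv)
    intro t
    have := hc t 0
    simp only [zero_smul, sub_zero] at this
    have : ω t = ω 0 + t • a := by
      rw [← this]; abel
    exact this
  -- Step 3: constancy of the squared norm along an affine path forces a = 0.
  have h1 := (key 1 0).2
  have h2 := (key 2 0).2
  rw [haff 1] at h1
  rw [haff 2] at h2
  simp only [Pi.add_apply, Pi.smul_apply, smul_eq_mul, one_mul] at h1 h2
  have hsum : (a 0)^2 + (a 1)^2 + (a 2)^2 = 0 := by nlinarith [h1, h2]
  have ha0 : a = 0 := by
    funext i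
    fin_cases i <;>
      simpa using (by nlinarith [sq_nonneg (a 0), sq_nonneg (a 1), sq_nonneg (a 2)] : _)
  intro t
  rw [hda t, ha0]
end
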